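/- Let ν ≥ 0 be a real number and z > 0. Then z/(ν − 1/2 + √((ν + 1/2)² + z²)) < I_ν(z)/I_{ν−1}(z) < z/(ν − 1 + √((ν + 1)² + z²)). -/

import Mathlib

/-- The modified Bessel function of the first kind of order `ν`, defined for `z > 0` by
`I_ν(z) = ∑_{k=0}^∞ (1/(k! Γ(ν+k+1))) (z/2)^(ν+2k)`. -/
noncomputable def besselI (ν z : ℝ) : ℝ :=
  ∑' k : ℕ, (1 / (k.factorial * Real.Gamma (ν + (k : ℝ) + 1))) * (z / 2) ^ (ν + 2 * (k : ℝ))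

open Real Finset

namespace BsAux


/-- Falling factorial. -/
def dsc (x : ℝ) : ℕ → ℝ
  | 0 => 1
  | m + 1 => dsc x m * (x - m)

@[simp] lemma dsc_zero (x : ℝ) : dsc x 0 = 1 := rfl
lemma dsc_succ (x : ℝ) (m : ℕ) : dsc x (m+1) = dsc x m * (x - m) := rfl

lemma dsc_pos {x : ℝ} : ∀ {m : ℕ}, (m : ℝ) - 1 < x → 0 < dsc x m
  | 0, _ => one_pos
  | m + 1, h => by
    have h1 : (m : ℝ) < x := by push_cast at h; linarith
    have hm : (m : ℝ) - 1 < x := by linarith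
    exact mul_pos (dsc_pos hm) (by linarith)

/-- Vandermonde identity in falling factorial form. -/
lemma vandermonde (n : ℕ) (x y : ℝ) :
    ∑ i ∈ range (n+1), (n.choose i : ℝ) * dsc x i * dsc y (n - i) = dsc (x + y) n := by
  induction n with
  | zero => simp
  | succ n ih =>
    set F : ℕ → ℝ := fun i => (n.choose i : ℝ) * dsc x i * dsc y (n + 1 - i) with hF
    set G : ℕ → ℝ := fun i => (n.choose i : ℝ) * dsc x (i+1) * dsc y (n - i) with hG
    have claim1 : ∑ i ∈ range (n+2), ((n+1).choose i : ℝ) * dsc x i * dsc y (n+1-i)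
        = (∑ i ∈ range (n+2), F i) + (∑ i ∈ range (n+1), G i) := by
      rw [Finset.sum_range_succ' (fun i => ((n+1).choose i : ℝ) * dsc x i * dsc y (n+1-i)),
        Finset.sum_range_succ' F]
      have : ∀ i, ((n+1).choose (i+1) : ℝ) * dsc x (i+1) * dsc y (n+1-(i+1))
          = F (i+1) + G i := by
        intro i
        simp only [hF, hG, Nat.choose_succ_succ n i]
        have : n + 1 - (i+1) = n - i := by omega
        rw [this]
        push_cast
        ring
      rw [Finset.sum_congr rfl (fun i _ => this i), Finset.sum_add_distrib]
      simp only [hF, hG]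
      simp [Nat.choose_zero_right]
      ring
    have claim2 : ∑ i ∈ range (n+2), F i = ∑ i ∈ range (n+1), F i := by
      rw [Finset.sum_range_succ]
      simp [hF]
    rw [claim1, claim2, ← Finset.sum_add_distrib]
    have : ∀ i ∈ range (n+1), F i + G i
        = ((n.choose i : ℝ) * dsc x i * dsc y (n - i)) * (x + y - n) := by
      intro i hi
      have hi' : i ≤ n := Nat.lt_succ_iff.mp (Finset.mem_range.mp hi)
      simp only [hF, hG]
      have h2 : n + 1 - i = (n - i) + 1 := by omega
      rw [h2, dsc_succ, dsc_succ]
      have h3 : ((n - i : ℕ) : ℝ) = (n : ℝ) - i := by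
        rw [Nat.cast_sub hi']
      rw [h3]
      ring
    rw [Finset.sum_congr rfl this, ← Finset.sum_mul, ih, dsc_succ]

/-- Rising factorial. -/
def ascf (x : ℝ) : ℕ → ℝ
  | 0 => 1
  | m + 1 => ascf x m * (x + m)

@[simp] lemma ascf_zero (x : ℝ) : ascf x 0 = 1 := rfl
lemma ascf_succ (x : ℝ) (m : ℕ) : ascf x (m+1) = ascf x m * (x + m) := rfl

lemma dsc_peel_top (y : ℝ) : ∀ m : ℕ, dsc y (m+1) = y * dsc (y - 1) m
  | 0 => by simp [dsc_succ]
  | m + 1 => by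
    rw [dsc_succ, dsc_peel_top y m, dsc_succ]
    push_cast
    ring

lemma ascf_eq_dsc (x : ℝ) : ∀ m : ℕ, ascf x m = dsc (x + m - 1) m
  | 0 => by simp
  | m + 1 => by
    rw [ascf_succ, ascf_eq_dsc x m, dsc_peel_top]
    have : (x + (m+1:ℕ) - 1) - 1 = x + m - 1 := by push_cast; ring
    rw [this]
    push_cast
    ring

lemma Gamma_add_nat {t : ℝ} (ht : 0 < t) (m : ℕ) :
    Real.Gamma (t + m) = ascf t m * Real.Gamma t := by
  induction m with
  | zero => simp
  | succ m ih =>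
    have h1 : t + (m+1 : ℕ) = (t + m) + 1 := by push_cast; ring
    rw [h1, Real.Gamma_add_one (by positivity), ih, ascf_succ]
    ring

lemma ascf_pos {x : ℝ} (hx : 0 < x) (m : ℕ) : 0 < ascf x m := by
  induction m with
  | zero => simp
  | succ m ih => rw [ascf_succ]; positivity


/-- Coefficient of the Bessel-type power series. -/
noncomputable def a (α : ℝ) (k : ℕ) : ℝ := 1 / (k.factorial * Real.Gamma (α + k + 1))

/-- Coefficient of the product series. -/
noncomputable def c (α β : ℝ) (n : ℕ) : ℝ :=
  Real.Gamma (α + β + 2*n + 1) /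
    (n.factorial * Real.Gamma (α + n + 1) * Real.Gamma (β + n + 1) * Real.Gamma (α + β + n + 1))

lemma sum_a_mul_a {α β : ℝ} (hα : 0 ≤ α) (hβ : 0 ≤ β) (n : ℕ) :
    ∑ i ∈ range (n+1), a α i * a β (n - i) = c α β n := by
  have hterm : ∀ i ∈ range (n+1), a α i * a β (n - i)
      = ((n.choose i : ℝ) * dsc (β + n) i * dsc (α + n) (n - i)) /
        (n.factorial * Real.Gamma (α + n + 1) * Real.Gamma (β + n + 1)) := by
    intro i hi
    have hi' : i ≤ n := Nat.lt_succ_iff.mp (Finset.mem_range.mp hi)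
    have fact1 : Real.Gamma (α + n + 1) = dsc (α + n) (n - i) * Real.Gamma (α + i + 1) := by
      have h1 : α + (n:ℝ) + 1 = (α + i + 1) + ((n - i : ℕ) : ℝ) := by
        rw [Nat.cast_sub hi']; ring
      rw [h1, Gamma_add_nat (by positivity), ascf_eq_dsc]
      congr 2
      rw [Nat.cast_sub hi']; ring
    have fact2 : Real.Gamma (β + n + 1) = dsc (β + n) i * Real.Gamma (β + (n - i : ℕ) + 1) := by
      have h1 : β + (n:ℝ) + 1 = (β + (n - i : ℕ) + 1) + (i : ℝ) := by
        rw [Nat.cast_sub hi']; ring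
      rw [h1, Gamma_add_nat (by positivity), ascf_eq_dsc]
      congr 2
      rw [Nat.cast_sub hi']; ring
    have fact3 : (n.factorial : ℝ) = (n.choose i : ℝ) * i.factorial * (n - i).factorial := by
      rw [← Nat.cast_mul, ← Nat.cast_mul, ← Nat.choose_mul_factorial_mul_factorial hi']
    have hd1 : 0 < dsc (α + n) (n - i) := dsc_pos (by
      have : ((n - i : ℕ) : ℝ) ≤ n := by rw [Nat.cast_sub hi']; push_cast; linarith [Nat.cast_nonneg (α := ℝ) i]
      linarith)
    have hd2 : 0 < dsc (β + n) i := dsc_pos (by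
      have : (i : ℝ) ≤ n := by exact_mod_cast hi'
      linarith)
    have hGα : 0 < Real.Gamma (α + i + 1) := Real.Gamma_pos_of_pos (by positivity)
    have hGβ : 0 < Real.Gamma (β + (n - i : ℕ) + 1) := Real.Gamma_pos_of_pos (by positivity)
    have hfi : (0:ℝ) < i.factorial := by exact_mod_cast i.factorial_pos
    have hfni : (0:ℝ) < (n - i).factorial := by exact_mod_cast (n - i).factorial_pos
    have hch : (0:ℝ) < (n.choose i : ℝ) := by exact_mod_cast Nat.choose_pos hi'
    have hden1 : (0:ℝ) < (i.factorial * Real.Gamma (α + i + 1)) *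
        ((n - i).factorial * Real.Gamma (β + (n - i : ℕ) + 1)) :=
      mul_pos (mul_pos hfi hGα) (mul_pos hfni hGβ)
    have hden2 : (0:ℝ) < (n.choose i : ℝ) * i.factorial * (n - i).factorial *
        (dsc (α + n) (n - i) * Real.Gamma (α + i + 1)) * (dsc (β + n) i * Real.Gamma (β + (n - i : ℕ) + 1)) :=
      mul_pos (mul_pos (mul_pos (mul_pos hch hfi) hfni) (mul_pos hd1 hGα)) (mul_pos hd2 hGβ)
    rw [a, a, fact1, fact2, fact3, div_mul_div_comm, div_eq_div_iff hden1.ne' hden2.ne']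
    ring
  rw [Finset.sum_congr rfl hterm, ← Finset.sum_div]
  have hv : ∑ i ∈ range (n+1), (n.choose i : ℝ) * dsc (β + n) i * dsc (α + n) (n - i)
      = dsc (α + β + 2*n) n := by
    rw [vandermonde n (β + n) (α + n)]
    congr 1
    ring
  rw [hv]
  have hfin : dsc (α + β + 2*(n:ℝ)) n = Real.Gamma (α + β + 2*n + 1) / Real.Gamma (α + β + n + 1) := by
    have h1 : α + β + 2*(n:ℝ) + 1 = (α + β + n + 1) + (n : ℝ) := by ring
    have h2 : Real.Gamma (α + β + 2*(n:ℝ) + 1) = ascf (α + β + n + 1) n * Real.Gamma (α + β + n + 1) := by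
      rw [h1, Gamma_add_nat (by positivity)]
    have h3 : ascf (α + β + n + 1) n = dsc (α + β + 2*(n:ℝ)) n := by
      rw [ascf_eq_dsc]
      congr 1
      ring
    have hG : 0 < Real.Gamma (α + β + n + 1) := Real.Gamma_pos_of_pos (by positivity)
    rw [h3] at h2
    field_simp [h2]
    exact h2.symm
  rw [hfin, c]
  have hG : 0 < Real.Gamma (α + β + n + 1) := Real.Gamma_pos_of_pos (by positivity)
  have hGa : 0 < Real.Gamma (α + n + 1) := Real.Gamma_pos_of_pos (by positivity)
  have hGb : 0 < Real.Gamma (β + n + 1) := Real.Gamma_pos_of_pos (by positivity)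
  have hf : (0:ℝ) < n.factorial := by exact_mod_cast n.factorial_pos
  rw [div_div]
  ring


noncomputable def g (α y : ℝ) : ℝ := ∑' k : ℕ, a α k * y ^ k

lemma a_nonneg {α : ℝ} (hα : -1 ≤ α) (k : ℕ) : 0 ≤ a α k := by
  have h : 0 ≤ Real.Gamma (α + k + 1) :=
    Real.Gamma_nonneg_of_nonneg (by push_cast; linarith [Nat.cast_nonneg (α := ℝ) k])
  have : (0:ℝ) ≤ k.factorial := by positivity
  rw [a]
  positivity

lemma a_succ {α : ℝ} (hα : -1 ≤ α) (k : ℕ) (hk : 1 ≤ k) :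
    a α (k+1) = a α k * (1 / ((k+1) * (α + k + 1))) := by
  have hpos : (0:ℝ) < α + k + 1 := by
    have : (1:ℝ) ≤ k := by exact_mod_cast hk
    linarith
  have hΓ : Real.Gamma (α + (k+1:ℕ) + 1) = (α + k + 1) * Real.Gamma (α + k + 1) := by
    have h1 : α + ((k:ℝ)+1) + 1 = (α + k + 1) + 1 := by ring
    push_cast
    rw [h1, Real.Gamma_add_one hpos.ne']
  rw [a, a, hΓ]
  have : ((k+1:ℕ).factorial : ℝ) = (k+1) * k.factorial := by
    push_cast [Nat.factorial_succ]; ring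
  push_cast [this]
  field_simp

lemma summable_norm_a (α : ℝ) (hα : -1 ≤ α) (y : ℝ) :
    Summable fun k : ℕ => ‖a α k * y ^ k‖ := by
  apply summable_of_ratio_norm_eventually_le (r := 1/2) (by norm_num)
  have hN : ∀ᶠ k : ℕ in Filter.atTop, max 1 ⌈2 * |y|⌉₊ ≤ k := Filter.eventually_ge_atTop _
  filter_upwards [hN] with k hk
  have hk1 : 1 ≤ k := le_trans (le_max_left _ _) hk
  have hky : 2 * |y| ≤ k := by
    calc 2 * |y| ≤ (⌈2 * |y|⌉₊ : ℝ) := Nat.le_ceil _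
    _ ≤ k := by exact_mod_cast le_trans (le_max_right _ _) hk
  have hkpos : (1:ℝ) ≤ k := by exact_mod_cast hk1
  simp only [norm_norm]
  have h1 : a α (k+1) * y^(k+1) = (a α k * y^k) * (y / ((k+1) * (α + k + 1))) := by
    rw [a_succ hα k hk1]; ring
  rw [h1, norm_mul]
  have hd : (0:ℝ) < (k+1) * (α + k + 1) := by
    have : (0:ℝ) < α + k + 1 := by linarith
    positivity
  have h2 : ‖y / ((k+1) * (α + k + 1))‖ ≤ 1/2 := by
    rw [norm_div, Real.norm_eq_abs, Real.norm_eq_abs, abs_of_pos hd, div_le_iff₀ hd]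
    have hbound : (k:ℝ) ≤ (k+1) * (α + k + 1) := by nlinarith
    calc |y| ≤ (k:ℝ)/2 := by linarith
    _ ≤ (k+1) * (α + k + 1) / 2 := by linarith
    _ = 1/2 * ((k+1) * (α + k + 1)) := by ring
  calc ‖a α k * y^k‖ * ‖y / ((k+1) * (α + k + 1))‖
      ≤ ‖a α k * y^k‖ * (1/2) := by
        exact mul_le_mul_of_nonneg_left h2 (norm_nonneg _)
    _ = 1/2 * ‖a α k * y^k‖ := by ring

lemma summable_a (α : ℝ) (hα : -1 ≤ α) (y : ℝ) : Summable fun k : ℕ => a α k * y ^ k :=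
  (summable_norm_a α hα y).of_norm

lemma besselI_eq {α z : ℝ} (hz : 0 < z) :
    besselI α z = (z/2) ^ α * g α ((z/2)^2) := by
  have hx : (0:ℝ) < z/2 := by linarith
  rw [besselI, g, ← tsum_mul_left]
  refine tsum_congr fun k => ?_
  have h1 : (z/2) ^ (α + 2*(k:ℝ)) = (z/2)^α * ((z/2)^2)^k := by
    rw [Real.rpow_add hx]
    congr 1
    rw [show (2*(k:ℝ)) = ((2*k : ℕ) : ℝ) by push_cast; ring, Real.rpow_natCast, pow_mul]
  rw [h1, a]
  ring

lemma g_nonneg {α : ℝ} (hα : -1 ≤ α) {y : ℝ} (hy : 0 ≤ y) : 0 ≤ g α y :=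
  tsum_nonneg fun k => mul_nonneg (a_nonneg hα k) (by positivity)

lemma a_pos {α : ℝ} {k : ℕ} (hα : 0 < α + k + 1) : 0 < a α k := by
  have := Real.Gamma_pos_of_pos hα
  have : (0:ℝ) < k.factorial := by positivity
  rw [a]
  positivity

lemma g_pos {α : ℝ} (hα : -1 ≤ α) {y : ℝ} (hy : 0 < y) : 0 < g α y := by
  refine Summable.tsum_pos (summable_a α hα y) (fun k => mul_nonneg (a_nonneg hα k) (by positivity)) 1 ?_
  refine mul_pos (a_pos ?_) (by positivity)
  push_cast
  linarith

lemma g_rec {μ : ℝ} (hμ : 0 ≤ μ) (y : ℝ) :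
    g (μ - 1) y = μ * g μ y + y * g (μ + 1) y := by
  have hs0 : Summable fun k : ℕ => a (μ-1) k * y ^ k := summable_a _ (by linarith) y
  have hs1 : Summable fun k : ℕ => a μ k * y ^ k := summable_a _ (by linarith) y
  have hs2 : Summable fun k : ℕ => a (μ+1) k * y ^ k := summable_a _ (by linarith) y
  -- identity A : a (μ-1) 0 = μ * a μ 0
  have idA : a (μ-1) 0 = μ * a μ 0 := by
    rcases eq_or_lt_of_le hμ with h0 | h0
    · simp only [a, ← h0, Nat.factorial_zero, Nat.cast_zero, Nat.cast_one, add_zero]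
      norm_num
    · have hΓ : Real.Gamma (μ + 1) = μ * Real.Gamma μ := Real.Gamma_add_one h0.ne'
      have hΓpos : 0 < Real.Gamma μ := Real.Gamma_pos_of_pos h0
      simp only [a, Nat.factorial_zero, Nat.cast_zero, Nat.cast_one, add_zero]
      rw [show μ - 1 + 1 = μ by ring, hΓ]
      field_simp
  -- identity B : a (μ-1) (k+1) = μ * a μ (k+1) + a (μ+1) k
  have idB : ∀ k : ℕ, a (μ-1) (k+1) = μ * a μ (k+1) + a (μ+1) k := by
    intro k
    have hpos : (0:ℝ) < μ + k + 1 := by positivity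
    have hΓ : Real.Gamma (μ + k + 2) = (μ + k + 1) * Real.Gamma (μ + k + 1) := by
      rw [show μ + (k:ℝ) + 2 = (μ + k + 1) + 1 by ring, Real.Gamma_add_one hpos.ne']
    have hΓpos : 0 < Real.Gamma (μ + k + 1) := Real.Gamma_pos_of_pos hpos
    have hfac : ((k+1:ℕ).factorial : ℝ) = (k+1) * k.factorial := by
      push_cast [Nat.factorial_succ]; ring
    have hfe : (0:ℝ) < k.factorial := by positivity
    rw [a, a, a]
    push_cast [hfac]
    rw [show μ - 1 + ((k:ℝ)+1) + 1 = μ + k + 1 by ring,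
      show μ + ((k:ℝ)+1) + 1 = μ + k + 2 by ring,
      show μ + 1 + (k:ℝ) + 1 = μ + k + 2 by ring, hΓ]
    field_simp
    ring
  calc g (μ-1) y = a (μ-1) 0 * y^0 + ∑' k : ℕ, a (μ-1) (k+1) * y^(k+1) := Summable.tsum_eq_zero_add hs0
  _ = μ * (a μ 0 * y^0) + ∑' k : ℕ, (μ * (a μ (k+1) * y^(k+1)) + y * (a (μ+1) k * y^k)) := by
      rw [idA]
      congr 1
      · ring
      · refine tsum_congr fun k => ?_
        rw [idB k]
        ring
  _ = μ * (a μ 0 * y^0) + (∑' k : ℕ, μ * (a μ (k+1) * y^(k+1)) + ∑' k : ℕ, y * (a (μ+1) k * y^k)) := by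
      congr 1
      refine Summable.tsum_add ?_ ?_
      · exact (((summable_nat_add_iff 1).mpr hs1).mul_left μ)
      · exact hs2.mul_left y
  _ = μ * g μ y + y * g (μ+1) y := by
      rw [tsum_mul_left, tsum_mul_left, g, g, Summable.tsum_eq_zero_add hs1]
      ring

lemma inner_sum {α β : ℝ} (hα : 0 ≤ α) (hβ : 0 ≤ β) (y : ℝ) (n : ℕ) :
    ∑ k ∈ range (n+1), (a α k * y^k) * (a β (n-k) * y^(n-k)) = c α β n * y^n := by
  rw [← sum_a_mul_a hα hβ n, Finset.sum_mul]
  refine Finset.sum_congr rfl fun i hi => ?_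
  have hi' : i ≤ n := Nat.lt_succ_iff.mp (Finset.mem_range.mp hi)
  have hyy : y^i * y^(n-i) = y^n := by rw [← pow_add]; congr 1; omega
  calc (a α i * y^i) * (a β (n-i) * y^(n-i)) = a α i * a β (n-i) * (y^i * y^(n-i)) := by ring
  _ = a α i * a β (n-i) * y^n := by rw [hyy]

lemma summable_c {α β : ℝ} (hα : 0 ≤ α) (hβ : 0 ≤ β) (y : ℝ) :
    Summable fun n : ℕ => c α β n * y ^ n := by
  have h := (summable_norm_sum_mul_range_of_summable_norm
    (summable_norm_a α (by linarith) y) (summable_norm_a β (by linarith) y)).of_norm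
  exact h.congr fun n => inner_sum hα hβ y n

lemma g_prod {α β : ℝ} (hα : 0 ≤ α) (hβ : 0 ≤ β) (y : ℝ) :
    g α y * g β y = ∑' n : ℕ, c α β n * y ^ n := by
  rw [g, g, tsum_mul_tsum_eq_tsum_sum_range_of_summable_norm
    (summable_norm_a α (by linarith) y) (summable_norm_a β (by linarith) y)]
  exact tsum_congr fun n => inner_sum hα hβ y n

lemma c_pos {α β : ℝ} (hα : 0 ≤ α) (hβ : 0 ≤ β) (n : ℕ) : 0 < c α β n := by
  have h1 : 0 < Real.Gamma (α + β + 2*n + 1) := Real.Gamma_pos_of_pos (by positivity)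
  have h2 : 0 < Real.Gamma (α + n + 1) := Real.Gamma_pos_of_pos (by positivity)
  have h3 : 0 < Real.Gamma (β + n + 1) := Real.Gamma_pos_of_pos (by positivity)
  have h4 : 0 < Real.Gamma (α + β + n + 1) := Real.Gamma_pos_of_pos (by positivity)
  have h5 : (0:ℝ) < n.factorial := by positivity
  rw [c]
  positivity

section coeff
variable {μ : ℝ} (hμ : 1 ≤ μ) (n : ℕ)

lemma f1 (hμ : 1 ≤ μ) (n : ℕ) : c μ μ n
    = Real.Gamma (2*μ+2*n+1) / ((n.factorial : ℝ) * ((μ+n) * Real.Gamma (μ+n))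
      * ((μ+n) * Real.Gamma (μ+n)) * Real.Gamma (2*μ+n+1)) := by
  have hpos : (0:ℝ) < μ + n := by positivity
  have hB : Real.Gamma (μ + n + 1) = (μ+n) * Real.Gamma (μ+n) := Real.Gamma_add_one hpos.ne'
  rw [c, show μ + μ + 2*(n:ℝ) + 1 = 2*μ+2*(n:ℝ)+1 by ring,
    show μ + μ + (n:ℝ) + 1 = 2*μ+(n:ℝ)+1 by ring, hB]

lemma f2 (hμ : 1 ≤ μ) (n : ℕ) : c (μ-1) (μ+1) n
    = Real.Gamma (2*μ+2*n+1) / ((n.factorial : ℝ) * Real.Gamma (μ+n)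
      * ((μ+n+1) * ((μ+n) * Real.Gamma (μ+n))) * Real.Gamma (2*μ+n+1)) := by
  have hpos : (0:ℝ) < μ + n := by positivity
  have hB : Real.Gamma (μ + n + 1) = (μ+n) * Real.Gamma (μ+n) := Real.Gamma_add_one hpos.ne'
  have hC : Real.Gamma (μ + n + 2) = (μ+n+1) * Real.Gamma (μ+n+1) := by
    rw [show μ + (n:ℝ) + 2 = (μ+n+1) + 1 by ring, Real.Gamma_add_one (by positivity)]
  rw [c, show μ - 1 + (μ+1) + 2*(n:ℝ) + 1 = 2*μ+2*(n:ℝ)+1 by ring,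
    show μ - 1 + (n:ℝ) + 1 = μ+(n:ℝ) by ring,
    show μ + 1 + (n:ℝ) + 1 = μ+(n:ℝ)+2 by ring,
    show μ - 1 + (μ+1) + (n:ℝ) + 1 = 2*μ+(n:ℝ)+1 by ring, hC, hB]

lemma f3 (hμ : 1 ≤ μ) (n : ℕ) : c (μ-1) μ (n+1)
    = (2*μ+2*n+1) * Real.Gamma (2*μ+2*n+1) / (((n:ℝ)+1) * (n.factorial : ℝ)
      * ((μ+n) * Real.Gamma (μ+n)) * ((μ+n+1) * ((μ+n) * Real.Gamma (μ+n)))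
      * Real.Gamma (2*μ+n+1)) := by
  have hpos : (0:ℝ) < μ + n := by positivity
  have hB : Real.Gamma (μ + n + 1) = (μ+n) * Real.Gamma (μ+n) := Real.Gamma_add_one hpos.ne'
  have hC : Real.Gamma (μ + n + 2) = (μ+n+1) * Real.Gamma (μ+n+1) := by
    rw [show μ + (n:ℝ) + 2 = (μ+n+1) + 1 by ring, Real.Gamma_add_one (by positivity)]
  have hG2 : Real.Gamma (2*μ+2*n+2) = (2*μ+2*n+1) * Real.Gamma (2*μ+2*n+1) := by
    rw [show 2*μ + 2*(n:ℝ) + 2 = (2*μ+2*n+1) + 1 by ring,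
      Real.Gamma_add_one (by positivity)]
  have hfac : (((n+1:ℕ)).factorial : ℝ) = ((n:ℝ)+1) * (n.factorial : ℝ) := by
    push_cast [Nat.factorial_succ]; ring
  rw [c, show μ - 1 + μ + 2*((n+1:ℕ):ℝ) + 1 = 2*μ+2*(n:ℝ)+2 by push_cast; ring,
    show μ - 1 + ((n+1:ℕ):ℝ) + 1 = μ+(n:ℝ)+1 by push_cast; ring,
    show μ + ((n+1:ℕ):ℝ) + 1 = μ+(n:ℝ)+2 by push_cast; ring,
    show μ - 1 + μ + ((n+1:ℕ):ℝ) + 1 = 2*μ+(n:ℝ)+1 by push_cast; ring,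
    hG2, hC, hB, hfac]

lemma c_lt (hμ : 1 ≤ μ) (n : ℕ) : c (μ-1) (μ+1) n < c μ μ n := by
  have hpos : (0:ℝ) < μ + n := by positivity
  have hA : 0 < Real.Gamma (μ+n) := Real.Gamma_pos_of_pos hpos
  have hG : 0 < Real.Gamma (2*μ+2*(n:ℝ)+1) := Real.Gamma_pos_of_pos (by positivity)
  have hH : 0 < Real.Gamma (2*μ+(n:ℝ)+1) := Real.Gamma_pos_of_pos (by positivity)
  have hf : (0:ℝ) < n.factorial := by positivity
  rw [f1 hμ n, f2 hμ n]
  apply div_lt_div_of_pos_left hG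
  · positivity
  · nlinarith [mul_pos (mul_pos hf (mul_pos hA hA)) hH]

lemma key_coeff (hμ : 1 ≤ μ) (n : ℕ) :
    2 * (c μ μ n - c (μ-1) (μ+1) n) ≤ c (μ-1) μ (n+1) := by
  have hpos : (0:ℝ) < μ + n := by positivity
  have hA : 0 < Real.Gamma (μ+n) := Real.Gamma_pos_of_pos hpos
  have hG : 0 < Real.Gamma (2*μ+2*(n:ℝ)+1) := Real.Gamma_pos_of_pos (by positivity)
  have hH : 0 < Real.Gamma (2*μ+(n:ℝ)+1) := Real.Gamma_pos_of_pos (by positivity)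
  have hf : (0:ℝ) < n.factorial := by positivity
  have hdiff : c μ μ n - c (μ-1) (μ+1) n
      = Real.Gamma (2*μ+2*(n:ℝ)+1) / ((μ+n+1) * ((n.factorial : ℝ)
        * ((μ+n) * Real.Gamma (μ+n)) * ((μ+n) * Real.Gamma (μ+n)) * Real.Gamma (2*μ+(n:ℝ)+1))) := by
    rw [f1 hμ n, f2 hμ n]
    rw [div_sub_div _ _ (by positivity) (by positivity), div_eq_div_iff (by positivity) (by positivity)]
    ring
  rw [hdiff, f3 hμ n, ← mul_div_assoc]
  rw [div_le_div_iff₀ (by positivity) (by positivity)]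
  have hn1 : (0:ℝ) < (n:ℝ) + 1 := by positivity
  have h2n : 2 * ((n:ℝ)+1) ≤ 2*μ+2*n+1 := by linarith
  have hden : (0:ℝ) < (n.factorial : ℝ) * ((μ+n) * Real.Gamma (μ+n))
      * ((μ+n) * Real.Gamma (μ+n)) * Real.Gamma (2*μ+(n:ℝ)+1) := by positivity
  nlinarith [mul_pos (mul_pos hG hden) (mul_pos hn1 (show (0:ℝ) < μ+n+1 by positivity)),
    mul_le_mul_of_nonneg_right h2n
      (le_of_lt (mul_pos hG (mul_pos hden (show (0:ℝ) < μ+n+1 by positivity))))]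

end coeff

set_option maxHeartbeats 1000000 in
lemma turan {μ y : ℝ} (hμ : 1 ≤ μ) (hy : 0 < y) :
    g (μ-1) y * g (μ+1) y < g μ y * g μ y := by
  rw [g_prod (by linarith) (by linarith) y, g_prod (by linarith) (by linarith) y]
  refine Summable.tsum_lt_tsum (fun n => ?_) (i := 0) ?_
    (summable_c (by linarith) (by linarith) y) (summable_c (by linarith) (by linarith) y)
  · exact mul_le_mul_of_nonneg_right (c_lt hμ n).le (by positivity)
  · simpa using mul_lt_mul_of_pos_right (c_lt hμ 0) (show (0:ℝ) < y^0 by norm_num)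

set_option maxHeartbeats 1000000 in
lemma keyB {μ y : ℝ} (hμ : 1 ≤ μ) (hy : 0 < y) :
    2*y*(g μ y * g μ y - g (μ-1) y * g (μ+1) y) < g (μ-1) y * g μ y := by
  have hs1 : Summable fun n : ℕ => c μ μ n * y^n := summable_c (by linarith) (by linarith) y
  have hs2 : Summable fun n : ℕ => c (μ-1) (μ+1) n * y^n :=
    summable_c (by linarith) (by linarith) y
  have hs3 : Summable fun n : ℕ => c (μ-1) μ n * y^n := summable_c (by linarith) (by linarith) y
  rw [g_prod (by linarith) (by linarith) y, g_prod (by linarith) (by linarith) y,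
    g_prod (by linarith) (by linarith) y]
  have hsub : (∑' n : ℕ, c μ μ n * y^n) - (∑' n : ℕ, c (μ-1) (μ+1) n * y^n)
      = ∑' n : ℕ, (c μ μ n - c (μ-1) (μ+1) n) * y^n := by
    rw [← Summable.tsum_sub hs1 hs2]
    exact tsum_congr fun n => by ring
  rw [hsub, ← tsum_mul_left, Summable.tsum_eq_zero_add hs3]
  have hle : (∑' n : ℕ, 2*y*((c μ μ n - c (μ-1) (μ+1) n) * y^n))
      ≤ ∑' n : ℕ, c (μ-1) μ (n+1) * y^(n+1) := by
    refine Summable.tsum_le_tsum (fun n => ?_) ?_ ?_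
    · have hk := key_coeff hμ n
      have h1 : 2*y*((c μ μ n - c (μ-1) (μ+1) n) * y^n)
          = (2*(c μ μ n - c (μ-1) (μ+1) n)) * y^(n+1) := by ring
      rw [h1]
      exact mul_le_mul_of_nonneg_right hk (by positivity)
    · exact ((hs1.sub hs2).congr fun n => by ring).mul_left (2*y)
    · exact (summable_nat_add_iff 1).mpr hs3
  have hpos0 : 0 < c (μ-1) μ 0 * y^0 :=
    mul_pos (c_pos (by linarith) (by linarith) 0) (by positivity)
  linarith

end BsAux

open BsAux in
set_option maxHeartbeats 1000000 in
theorem bessel_ratio_bounds (ν z : ℝ) (hν : 0 ≤ ν) (hz : 0 < z) :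
    z / (ν - 1/2 + Real.sqrt ((ν + 1/2) ^ 2 + z ^ 2)) < besselI ν z / besselI (ν - 1) z ∧
      besselI ν z / besselI (ν - 1) z < z / (ν - 1 + Real.sqrt ((ν + 1) ^ 2 + z ^ 2)) := by
  obtain ⟨x, hxdef⟩ : ∃ x : ℝ, z/2 = x := ⟨z/2, rfl⟩
  have hx : 0 < x := by rw [← hxdef]; positivity
  obtain ⟨y, hydef⟩ : ∃ y : ℝ, x^2 = y := ⟨x^2, rfl⟩
  have hy : 0 < y := by rw [← hydef]; positivity
  obtain ⟨A, hAdef⟩ : ∃ A : ℝ, g (ν-1) y = A := ⟨_, rfl⟩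
  obtain ⟨B, hBdef⟩ : ∃ B : ℝ, g ν y = B := ⟨_, rfl⟩
  obtain ⟨C, hCdef⟩ : ∃ C : ℝ, g (ν+1) y = C := ⟨_, rfl⟩
  obtain ⟨D, hDdef⟩ : ∃ D : ℝ, g (ν+2) y = D := ⟨_, rfl⟩
  have hA : 0 < A := by rw [← hAdef]; exact g_pos (by linarith) hy
  have hB : 0 < B := by rw [← hBdef]; exact g_pos (by linarith) hy
  have hC : 0 < C := by rw [← hCdef]; exact g_pos (by linarith) hy
  have hD : 0 < D := by rw [← hDdef]; exact g_pos (by linarith) hy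
  have hrec1 : A = ν * B + y * C := by
    rw [← hAdef, ← hBdef, ← hCdef]; exact g_rec hν y
  have hrec2 : B = (ν+1) * C + y * D := by
    rw [← hBdef, ← hCdef, ← hDdef]
    have h := g_rec (μ := ν+1) (by linarith) y
    rw [show ν+1-1 = ν by ring, show ν+1+1 = ν+2 by ring] at h
    exact h
  have hturan : B * D < C * C := by
    rw [← hBdef, ← hCdef, ← hDdef]
    have h := turan (μ := ν+1) (by linarith) hy
    rw [show ν+1-1 = ν by ring, show ν+1+1 = ν+2 by ring] at h
    exact h
  have hkey : 2*y*(C*C - B*D) < B*C := by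
    rw [← hBdef, ← hCdef, ← hDdef]
    have h := keyB (μ := ν+1) (by linarith) hy
    rw [show ν+1-1 = ν by ring, show ν+1+1 = ν+2 by ring] at h
    exact h
  have hB2 : B*B = (ν+1)*(C*B) + y*(D*B) := by rw [hrec2]; ring
  have hz2 : z^2 = 4*y := by rw [← hydef, ← hxdef]; ring
  have e1 : besselI ν z = x^ν * B := by
    rw [besselI_eq hz, hxdef, hydef, hBdef]
  have e2 : besselI (ν-1) z = x^(ν-1) * A := by
    rw [besselI_eq hz, hxdef, hydef, hAdef]
  have hxν1 : (0:ℝ) < x^(ν-1) := Real.rpow_pos_of_pos hx _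
  have hratio : besselI ν z / besselI (ν - 1) z = x*B/A := by
    rw [e1, e2]
    have h1 : x^ν = x^(ν-1) * x := by
      nth_rewrite 1 [show ν = (ν-1)+1 by ring]
      exact Real.rpow_add_one hx.ne' (ν-1)
    rw [h1, mul_assoc, mul_div_mul_left _ _ hxν1.ne']
  rw [hratio]
  constructor
  · -- lower bound
    obtain ⟨s, hsdef⟩ : ∃ s : ℝ, Real.sqrt ((ν + 1/2) ^ 2 + z ^ 2) = s := ⟨_, rfl⟩
    rw [hsdef]
    have hs1 : ν + 1/2 < s := by
      rw [← hsdef]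
      apply (Real.lt_sqrt (by positivity)).mpr
      nlinarith
    have hden : 0 < ν - 1/2 + s := by linarith
    have hkey2 : (ν+1/2)*B + 2*y*C < s*B := by
      have hsb : s*B = Real.sqrt (((ν+1/2)^2 + 4*y) * B^2) := by
        rw [Real.sqrt_mul (by positivity), Real.sqrt_sq hB.le, ← hz2, hsdef]
      rw [hsb]
      apply (Real.lt_sqrt (by positivity)).mpr
      nlinarith [mul_lt_mul_of_pos_left hkey (show (0:ℝ) < 2*y by linarith)]
    rw [div_lt_div_iff₀ hden (by positivity)]
    have hm := mul_lt_mul_of_pos_left hkey2 hx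
    have hzx : z = 2*x := by rw [← hxdef]; ring
    rw [hzx]
    nlinarith [hm]
  · -- upper bound
    obtain ⟨t, htdef⟩ : ∃ t : ℝ, Real.sqrt ((ν + 1) ^ 2 + z ^ 2) = t := ⟨_, rfl⟩
    rw [htdef]
    have ht1 : ν + 1 < t := by
      rw [← htdef]
      apply (Real.lt_sqrt (by positivity)).mpr
      nlinarith
    have hden : 0 < ν - 1 + t := by linarith
    have hkey2 : t*B < (ν+1)*B + 2*y*C := by
      have htb : t*B = Real.sqrt (((ν+1)^2 + 4*y) * B^2) := by
        rw [Real.sqrt_mul (by positivity), Real.sqrt_sq hB.le, ← hz2, htdef]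
      rw [htb]
      apply (Real.sqrt_lt' (by positivity)).mpr
      have h3 : 4*y*(B*B) = 4*y*((ν+1)*(C*B) + y*(D*B)) := by rw [← hB2]
      nlinarith [mul_lt_mul_of_pos_left hturan (show (0:ℝ) < 4*y^2 by positivity), h3]
    rw [div_lt_div_iff₀ (by positivity) hden]
    have hm := mul_lt_mul_of_pos_left hkey2 hx
    have hzx : z = 2*x := by rw [← hxdef]; ring
    rw [hzx]
    nlinarith [hm]
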